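/- arXiv:1508.00938 — 4 statements merged into one kernel-verified Lean document; each statement's English description precedes it below -/
import Mathlib

section
/- Hoeffding step in the proof of Lemma 2: Let b be a positive integer and let q be a real number with 0 < q < 1 and b·q ≥ 1. Then b·q·(1−q)^{b−1} + (1−q)^b ≤ exp(−2(b·q − 1)²/b). (The left-hand side is the probability that among b independent Bernoulli trials, each failing with probability 1−q, at least b−1 trials fail.) -/
open Real

/-- Scalar Hoeffding's lemma for a Bernoulli variable. -/
lemma hoeff_scalar (q : ℝ) (hq0 : 0 < q) (hq1 : q < 1) (l : ℝ) (hl : 0 ≤ l) :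
    q * Real.exp (-l) + (1 - q) ≤ Real.exp (-q * l + l ^ 2 / 8) := by
  set ψ' : ℝ → ℝ := fun t => -q + t / 4 + q * Real.exp (-t) / (q * Real.exp (-t) + (1 - q))
    with hψ'
  set ψ : ℝ → ℝ := fun t => -q * t + t ^ 2 / 8 - Real.log (q * Real.exp (-t) + (1 - q))
    with hψ
  have hpos : ∀ t : ℝ, 0 < q * Real.exp (-t) + (1 - q) := fun t => by
    nlinarith [Real.exp_pos (-t)]
  have hu : ∀ t : ℝ, HasDerivAt (fun s => q * Real.exp (-s)) (q * (Real.exp (-t) * -1)) t :=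
    fun t => ((hasDerivAt_neg t).exp).const_mul q
  have hv : ∀ t : ℝ, HasDerivAt (fun s => q * Real.exp (-s) + (1 - q))
      (q * (Real.exp (-t) * -1)) t := fun t => (hu t).add_const _
  have lemA : ∀ t : ℝ, HasDerivAt ψ (ψ' t) t := by
    intro t
    have h3 := ((hv t).log (hpos t).ne')
    have h4 : HasDerivAt (fun s : ℝ => -q * s) (-q * 1) t := (hasDerivAt_id t).const_mul (-q)
    have h5 : HasDerivAt (fun s : ℝ => s ^ 2 / 8) (2 * t ^ 1 / 8) t :=
      (hasDerivAt_pow 2 t).div_const 8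
    refine ((h4.add h5).sub h3).congr_deriv ?_
    have := (hpos t).ne'
    rw [hψ']
    field_simp
    ring
  have lemB : ∀ t : ℝ, HasDerivAt ψ'
      (1 / 4 + (q * (Real.exp (-t) * -1) * (q * Real.exp (-t) + (1 - q)) -
        q * Real.exp (-t) * (q * (Real.exp (-t) * -1))) / (q * Real.exp (-t) + (1 - q)) ^ 2)
      t := by
    intro t
    have hd : HasDerivAt (fun s => q * Real.exp (-s) / (q * Real.exp (-s) + (1 - q)))
        ((q * (Real.exp (-t) * -1) * (q * Real.exp (-t) + (1 - q)) -
          q * Real.exp (-t) * (q * (Real.exp (-t) * -1))) / (q * Real.exp (-t) + (1 - q)) ^ 2)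
        t := (hu t).div (hv t) (hpos t).ne'
    have h4 : HasDerivAt (fun s : ℝ => -q + s / 4) (1 / 4) t := by
      simpa using ((hasDerivAt_id t).div_const 4).const_add (-q)
    exact h4.add hd
  have mono' : Monotone ψ' := by
    apply monotone_of_deriv_nonneg (fun t => (lemB t).differentiableAt)
    intro t
    rw [(lemB t).deriv]
    have h1 := hpos t
    have h2 : 0 < Real.exp (-t) := Real.exp_pos _
    rw [div_add_div _ _ (by norm_num) (by positivity)]
    apply div_nonneg _ (by positivity)
    nlinarith [sq_nonneg (q * Real.exp (-t) - (1 - q))]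
  have hψ'0 : ψ' 0 = 0 := by
    simp [hψ']
  have hψ'nonneg : ∀ t : ℝ, 0 ≤ t → 0 ≤ ψ' t := fun t ht => hψ'0 ▸ mono' ht
  have monoψ : MonotoneOn ψ (Set.Ici 0) := by
    apply monotoneOn_of_deriv_nonneg (convex_Ici 0)
      (fun t _ => (lemA t).differentiableAt.continuousAt.continuousWithinAt)
      (fun t _ => (lemA t).differentiableAt.differentiableWithinAt)
    intro t ht
    rw [(lemA t).deriv]
    exact hψ'nonneg t (le_of_lt (by simpa using ht))
  have hψ0 : ψ 0 = 0 := by simp [hψ]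
  have hψl : 0 ≤ ψ l := by
    have := monoψ (Set.self_mem_Ici) (Set.mem_Ici.mpr hl) hl
    rwa [hψ0] at this
  have : Real.log (q * Real.exp (-l) + (1 - q)) ≤ -q * l + l ^ 2 / 8 := by
    simp only [hψ] at hψl; linarith
  exact (Real.log_le_iff_le_exp (hpos l)).mp this

lemma binom_aux (b : ℕ) (hb : 1 ≤ b) (x y : ℝ) (hx : 0 ≤ x) (hy : 0 ≤ y) :
    y ^ b + b * x * y ^ (b - 1) ≤ (x + y) ^ b := by
  rw [add_pow]
  have hsub : ({0, 1} : Finset ℕ) ⊆ Finset.range (b + 1) := by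
    intro k hk
    simp only [Finset.mem_insert, Finset.mem_singleton] at hk
    simp only [Finset.mem_range]; omega
  calc y ^ b + b * x * y ^ (b - 1)
      = ∑ k ∈ ({0, 1} : Finset ℕ), x ^ k * y ^ (b - k) * (b.choose k) := by
        rw [Finset.sum_insert (by simp), Finset.sum_singleton]
        simp [Nat.choose_one_right]
        ring
    _ ≤ ∑ k ∈ Finset.range (b + 1), x ^ k * y ^ (b - k) * (b.choose k) :=
        Finset.sum_le_sum_of_subset_of_nonneg hsub (fun i _ _ => by positivity)

/-- **Hoeffding step in the proof of Lemma 2.**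
Let `b` be a positive integer and `q` a real number with `0 < q < 1` and `b·q ≥ 1`.
Then `b·q·(1−q)^{b−1} + (1−q)^b ≤ exp(−2(b·q − 1)²/b)`.  (The left-hand side is the
probability that among `b` independent Bernoulli trials, each failing with probability
`1−q`, at least `b−1` trials fail.) -/
theorem hoeffding_step (b : ℕ) (hb : 0 < b) (q : ℝ) (hq0 : 0 < q) (hq1 : q < 1)
    (hbq : 1 ≤ (b : ℝ) * q) :
    (b : ℝ) * q * (1 - q) ^ (b - 1) + (1 - q) ^ b ≤
      Real.exp (-2 * ((b : ℝ) * q - 1) ^ 2 / b) := by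
  have hb0 : (0 : ℝ) < b := Nat.cast_pos.mpr hb
  set t : ℝ := (b : ℝ) * q - 1 with ht
  set l : ℝ := 4 * t / b with hlf
  have hl : 0 ≤ l := by
    apply div_nonneg _ hb0.le
    linarith
  set x : ℝ := q * Real.exp (-l) with hx
  set y : ℝ := 1 - q with hy
  have hx0 : 0 ≤ x := by positivity
  have hy0 : 0 ≤ y := by simp [hy]; linarith
  have hexp1 : Real.exp l * Real.exp (-l) = 1 := by
    rw [← Real.exp_add]; simp
  have key1 : (b : ℝ) * q * (1 - q) ^ (b - 1) + (1 - q) ^ b ≤ Real.exp l * (x + y) ^ b := by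
    have h1 := binom_aux b hb x y hx0 hy0
    have h2 : (1 : ℝ) ≤ Real.exp l := Real.one_le_exp hl
    have h3 : Real.exp l * (y ^ b + (b : ℝ) * x * y ^ (b - 1)) ≤ Real.exp l * (x + y) ^ b :=
      mul_le_mul_of_nonneg_left h1 (Real.exp_pos l).le
    have h4 : Real.exp l * ((b : ℝ) * x * y ^ (b - 1)) = (b : ℝ) * q * y ^ (b - 1) := by
      rw [hx]
      linear_combination ((b : ℝ) * q * y ^ (b - 1)) * hexp1
    have h5 : y ^ b + (b : ℝ) * q * y ^ (b - 1) ≤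
        Real.exp l * (y ^ b + (b : ℝ) * x * y ^ (b - 1)) := by
      have heq : Real.exp l * (y ^ b + (b : ℝ) * x * y ^ (b - 1)) =
          Real.exp l * y ^ b + (b : ℝ) * q * y ^ (b - 1) := by rw [mul_add, h4]
      have hyb : y ^ b ≤ Real.exp l * y ^ b := le_mul_of_one_le_left (by positivity) h2
      rw [heq]; linarith
    linarith
  have key2 : x + y ≤ Real.exp (-q * l + l ^ 2 / 8) := hoeff_scalar q hq0 hq1 l hl
  have key3 : (x + y) ^ b ≤ Real.exp (-q * l + l ^ 2 / 8) ^ b :=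
    pow_le_pow_left₀ (by positivity) key2 b
  have key4 : Real.exp l * (x + y) ^ b ≤ Real.exp (l + b * (-q * l + l ^ 2 / 8)) := by
    rw [Real.exp_add, Real.exp_nat_mul]
    exact mul_le_mul_of_nonneg_left key3 (Real.exp_pos l).le
  have key5 : l + (b : ℝ) * (-q * l + l ^ 2 / 8) = -2 * t ^ 2 / b := by
    rw [hlf, ht]
    field_simp
    ring
  calc (b : ℝ) * q * (1 - q) ^ (b - 1) + (1 - q) ^ b
      ≤ Real.exp l * (x + y) ^ b := key1
    _ ≤ Real.exp (l + b * (-q * l + l ^ 2 / 8)) := key4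
    _ = Real.exp (-2 * t ^ 2 / b) := by rw [key5]
end

section
/- Transversality of the logical X and Z operators: let n be an odd positive integer and let U be the n-qubit encoding unitary. Then U†·(X ⊗ I^{⊗(n−1)})·U = X^{⊗n} and U·(X ⊗ I^{⊗(n−1)})·U† = X^{⊗n}, and likewise U†·(Z ⊗ I^{⊗(n−1)})·U = Z^{⊗n} and U·(Z ⊗ I^{⊗(n−1)})·U† = Z^{⊗n}. -/
open Matrix

noncomputable section

/-- States of `n` qubits. -/
abbrev NState (n : ℕ) := Fin n → Fin 2

/-- Operators on `n` qubits. -/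
abbrev NMat (n : ℕ) := Matrix (NState n) (NState n) ℂ

/-- The Pauli `X` matrix. -/
def Xmat : Matrix (Fin 2) (Fin 2) ℂ := !![0, 1; 1, 0]

/-- The Pauli `Z` matrix. -/
def Zmat : Matrix (Fin 2) (Fin 2) ℂ := !![1, 0; 0, -1]

/-- The CNOT gate on `n` qubits with control qubit `c` and target qubit `t`:
the permutation matrix mapping the basis state `f` to `f` updated at `t` to
`f t + f c` (mod 2). -/
def nCNOT {n : ℕ} (c t : Fin n) : NMat n :=
  fun g f => if g = Function.update f t (f t + f c) then 1 else 0

/-- The `n`-qubit encoding unitary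
`U = (C_{1→2}·C_{1→3} ⋯ C_{1→n})·(C_{2→1}·C_{3→1} ⋯ C_{n→1})` (qubits 1-indexed). -/
def encU (n : ℕ) (hn : 0 < n) : NMat n :=
  (((List.finRange n).map fun j =>
      if j = ⟨0, hn⟩ then 1 else nCNOT ⟨0, hn⟩ j).prod) *
  (((List.finRange n).map fun j =>
      if j = ⟨0, hn⟩ then 1 else nCNOT j ⟨0, hn⟩).prod)

/-- `G ⊗ I^{⊗(n−1)}`: the single-qubit gate `G` acting on qubit 1, tensored with the
identity on qubits `2,…,n`. -/
def onFirst {n : ℕ} (hn : 0 < n) (G : Matrix (Fin 2) (Fin 2) ℂ) : NMat n :=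
  fun g f => G (g ⟨0, hn⟩) (f ⟨0, hn⟩) *
    (if ∀ j : Fin n, j ≠ ⟨0, hn⟩ → g j = f j then 1 else 0)

/-- `G^{⊗n}`: the `n`-fold Kronecker power of the single-qubit gate `G`. -/
def kronPow {n : ℕ} (G : Matrix (Fin 2) (Fin 2) ℂ) : NMat n :=
  fun g f => ∏ j : Fin n, G (g j) (f j)

namespace TransAux

variable {n : ℕ}

/-- permutation-style matrix -/
def pm (σ : NState n → NState n) : NMat n := fun g f => if g = σ f then 1 else 0

/-- diagonal-style matrix -/
def Dm (d : NState n → ℂ) : NMat n := fun g f => if g = f then d f else 0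

lemma mul_pm (M : NMat n) (τ : NState n → NState n) :
    M * pm τ = fun g f => M g (τ f) := by
  funext g f
  simp [Matrix.mul_apply, pm]

lemma pm_mul_pm (γ τ : NState n → NState n) :
    pm γ * pm τ = pm (fun f => γ (τ f)) := by
  rw [mul_pm]; rfl

lemma pm_conj (σ τ : NState n → NState n)
    (h1 : ∀ f, τ (σ f) = f) (h2 : ∀ f, σ (τ f) = f) :
    (pm σ)ᴴ = pm τ := by
  funext g f
  have hiff : (f = σ g) ↔ (g = τ f) :=
    ⟨fun h => by rw [h, h1], fun h => by rw [h, h2]⟩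
  simp [Matrix.conjTranspose_apply, pm, hiff, apply_ite (star : ℂ → ℂ)]

lemma pm_Dm_pm (σ τ : NState n → NState n) (d : NState n → ℂ)
    (h : ∀ f, τ (σ f) = f) :
    pm τ * Dm d * pm σ = Dm (fun f => d (σ f)) := by
  rw [Matrix.mul_assoc, mul_pm]
  funext g f
  show (pm τ * Dm d) g (σ f) = _
  simp only [Matrix.mul_apply, pm, Dm, ite_mul, one_mul, zero_mul]
  have hsw : ∀ x : NState n, (if g = τ x then if x = σ f then d (σ f) else 0 else 0)
      = (if x = σ f then (if g = τ x then d (σ f) else 0) else 0) := by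
    intro x; by_cases h1 : g = τ x <;> by_cases h2 : x = σ f <;> simp [h1, h2]
  simp_rw [hsw, Finset.sum_ite_eq' Finset.univ (σ f), Finset.mem_univ, if_true, h f]


lemma pm_congr {σ τ : NState n → NState n} (h : ∀ f k, σ f k = τ f k) :
    pm σ = pm τ := by
  have : σ = τ := funext fun f => funext fun k => h f k
  rw [this]

lemma prodA (z : Fin n) (l : List (Fin n)) (hl : l.Nodup) :
    ((l.map fun j => if j = z then (1 : NMat n) else nCNOT z j).prod)
      = pm (fun f k => if k ≠ z ∧ k ∈ l then f k + f z else f k) := by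
  induction l with
  | nil =>
      funext g f
      simp [pm, Matrix.one_apply]
  | cons j t ih =>
      obtain ⟨hjt, htd⟩ := List.nodup_cons.mp hl
      rw [List.map_cons, List.prod_cons, ih htd]
      by_cases hj : j = z
      · subst hj
        rw [if_pos rfl, one_mul]
        apply pm_congr
        intro f k
        by_cases hk : k = j <;> simp [hk, List.mem_cons]
      · rw [if_neg hj]
        have hrw : nCNOT z j = pm (fun f => Function.update f j (f j + f z)) := rfl
        rw [hrw, pm_mul_pm]
        apply pm_congr
        intro f k
        by_cases hk : k = j
        · subst hk
          have h1 : ¬ (¬ k = z ∧ k ∈ t) := fun h => hjt h.2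
          simp [Function.update_self, h1, hj, hjt, List.mem_cons]
        · simp [Function.update_of_ne hk, List.mem_cons, hk]

lemma prodB (z : Fin n) (l : List (Fin n)) :
    ((l.map fun j => if j = z then (1 : NMat n) else nCNOT j z).prod)
      = pm (fun f k => if k = z then
          f z + (l.map (fun j => if j = z then 0 else f j)).sum else f k) := by
  induction l with
  | nil =>
      funext g f
      simp only [List.map_nil, List.prod_nil, List.sum_nil, add_zero]
      have : (fun k => if k = z then f z else f k) = f := by
        funext k; by_cases hk : k = z <;> simp [hk]
      simp [pm, Matrix.one_apply, this]
  | cons j t ih =>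
      rw [List.map_cons, List.prod_cons, ih]
      by_cases hj : j = z
      · subst hj
        rw [if_pos rfl, one_mul]
        apply pm_congr
        intro f k
        simp
      · rw [if_neg hj]
        have hrw : nCNOT j z = pm (fun f => Function.update f z (f z + f j)) := rfl
        rw [hrw, pm_mul_pm]
        apply pm_congr
        intro f k
        by_cases hk : k = z
        · subst hk
          simp only [Function.update_self, if_pos rfl, List.map_cons, List.sum_cons,
            if_neg hj, if_true]
          abel
        · simp [Function.update_of_ne hk, hk]


def sF (f : NState n) : Fin 2 := ∑ j, f j
def σm (z : Fin n) (f : NState n) : NState n :=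
  fun k => if k = z then sF f else f k + sF f
def τm (z : Fin n) (f : NState n) : NState n :=
  fun k => if k = z then sF f else f k + f z
def φm (z : Fin n) (f : NState n) : NState n :=
  fun k => if k = z then f z + 1 else f k
def dz : Fin 2 → ℂ := fun a => if a = 1 then -1 else 1

lemma nsmul_odd (ho : Odd n) (b : Fin 2) : n • b = b := by
  obtain ⟨m, hm⟩ := ho
  subst hm
  have h2 : b + b = 0 := by revert b; decide
  induction m with
  | zero => simp
  | succ m ih =>
      have : 2 * (m+1) + 1 = (2 * m + 1) + 2 := by ring
      rw [this, add_nsmul, ih, two_nsmul, h2, add_zero]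

lemma sum_ite_odd (ho : Odd n) (z : Fin n) (f : NState n) (a b : Fin 2) :
    (∑ k : Fin n, if k = z then a else f k + b) = a + sF f + f z := by
  have key : ∀ x c d : Fin 2, x = (x + c + d) + (c + d) := by decide
  calc (∑ k : Fin n, if k = z then a else f k + b)
      = ∑ k : Fin n, ((if k = z then a + f z + b else 0) + (f k + b)) := by
        refine Finset.sum_congr rfl fun k _ => ?_
        by_cases hk : k = z
        · simp only [hk, if_pos rfl]; exact key a (f z) b
        · simp [hk]
    _ = (∑ k : Fin n, if k = z then a + f z + b else 0)
          + ((∑ k : Fin n, f k) + ∑ k : Fin n, (b : Fin 2)) := by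
        rw [Finset.sum_add_distrib, Finset.sum_add_distrib]
    _ = (a + f z + b) + (sF f + n • b) := by
        rw [Finset.sum_ite_eq' Finset.univ z, if_pos (Finset.mem_univ z),
          Finset.sum_const, Finset.card_univ, Fintype.card_fin]
        rfl
    _ = a + sF f + f z := by
        rw [nsmul_odd ho]
        have : ∀ a c b s : Fin 2, (a + c + b) + (s + b) = a + s + c := by decide
        exact this a (f z) b (sF f)

lemma sF_σm (ho : Odd n) (z : Fin n) (f : NState n) : sF (σm z f) = f z := by
  have h1 : sF (σm z f) = ∑ k : Fin n, if k = z then sF f else f k + sF f := rfl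
  rw [h1, sum_ite_odd ho]
  have : ∀ s c : Fin 2, s + s + c = c := by decide
  exact this _ _

lemma sF_τm (ho : Odd n) (z : Fin n) (f : NState n) : sF (τm z f) = f z := by
  have h1 : sF (τm z f) = ∑ k : Fin n, if k = z then sF f else f k + f z := rfl
  rw [h1, sum_ite_odd ho]
  have : ∀ s c : Fin 2, s + s + c = c := by decide
  exact this _ _

lemma sF_φσ (ho : Odd n) (z : Fin n) (f : NState n) : sF (φm z (σm z f)) = f z + 1 := by
  have h1 : sF (φm z (σm z f)) = ∑ k : Fin n, if k = z then sF f + 1 else f k + sF f := by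
    refine Finset.sum_congr rfl fun k _ => ?_
    by_cases hk : k = z <;> simp [φm, σm, hk]
  rw [h1, sum_ite_odd ho]
  have : ∀ s c : Fin 2, (s + 1) + s + c = c + 1 := by decide
  exact this _ _

lemma sF_φτ (ho : Odd n) (z : Fin n) (f : NState n) : sF (φm z (τm z f)) = f z + 1 := by
  have h1 : sF (φm z (τm z f)) = ∑ k : Fin n, if k = z then sF f + 1 else f k + f z := by
    refine Finset.sum_congr rfl fun k _ => ?_
    by_cases hk : k = z <;> simp [φm, τm, hk]
  rw [h1, sum_ite_odd ho]
  have : ∀ s c : Fin 2, (s + 1) + s + c = c + 1 := by decide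
  exact this _ _

lemma invA (ho : Odd n) (z : Fin n) (f : NState n) : τm z (σm z f) = f := by
  funext k
  by_cases hk : k = z
  · subst hk; simp only [τm, if_pos rfl]; exact sF_σm ho k f
  · simp only [τm, σm, if_pos rfl, if_neg hk]
    have : ∀ a s : Fin 2, (a + s) + s = a := by decide
    exact this _ _

lemma invB (ho : Odd n) (z : Fin n) (f : NState n) : σm z (τm z f) = f := by
  funext k
  by_cases hk : k = z
  · subst hk; simp only [σm, if_pos rfl]; exact sF_τm ho k f
  · simp only [σm, if_neg hk]
    rw [sF_τm ho]
    simp only [τm, if_neg hk]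
    have : ∀ a s : Fin 2, (a + s) + s = a := by decide
    exact this _ _

lemma flipA (ho : Odd n) (z : Fin n) (f : NState n) : τm z (φm z (σm z f)) = fun k => f k + 1 := by
  funext k
  by_cases hk : k = z
  · subst hk; simp only [τm, if_pos rfl]; exact sF_φσ ho k f
  · simp only [τm, φm, σm, if_pos rfl, if_neg hk]
    have : ∀ a s : Fin 2, (a + s) + (s + 1) = a + 1 := by decide
    exact this _ _

lemma flipB (ho : Odd n) (z : Fin n) (f : NState n) : σm z (φm z (τm z f)) = fun k => f k + 1 := by
  funext k
  by_cases hk : k = z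
  · subst hk; simp only [σm, if_pos rfl]; exact sF_φτ ho k f
  · simp only [σm, if_neg hk]
    rw [sF_φτ ho]
    simp only [φm, τm, if_neg hk]
    have : ∀ a s : Fin 2, (a + s) + (s + 1) = a + 1 := by decide
    exact this _ _

end TransAux

namespace TransAux

variable {n : ℕ}

lemma hx : ∀ a b : Fin 2, Xmat a b = if a = b + 1 then 1 else 0 := by
  intro a b
  fin_cases a <;> fin_cases b <;>
    first
      | (rw [if_pos (by decide)]; simp [Xmat])
      | (rw [if_neg (by decide)]; simp [Xmat])

lemma hz1 : ∀ a : Fin 2, Zmat a a = dz a := by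
  intro a; fin_cases a <;> norm_num [Zmat, dz]

lemma hz2 : ∀ a b : Fin 2, a ≠ b → Zmat a b = 0 := by
  intro a b hab
  fin_cases a <;> fin_cases b <;>
    first
      | exact absurd (by decide) hab
      | simp [Zmat]

lemma dz_add : ∀ a b : Fin 2, dz (a + b) = dz a * dz b := by
  intro a b; fin_cases a <;> fin_cases b <;> norm_num [dz] <;> decide

lemma prod_dz (s : Finset (Fin n)) (f : NState n) :
    (∏ j ∈ s, dz (f j)) = dz (∑ j ∈ s, f j) := by
  induction s using Finset.induction with
  | empty => simp [dz]
  | insert a s h ih => rw [Finset.prod_insert h, Finset.sum_insert h, ih, dz_add]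

lemma encU_eq (hn : 0 < n) (ho : Odd n) : encU n hn = pm (σm ⟨0, hn⟩) := by
  set z : Fin n := ⟨0, hn⟩ with hz
  rw [encU, prodA z _ (List.nodup_finRange n), prodB z, pm_mul_pm]
  apply pm_congr
  intro f k
  have hsum : (List.map (fun j => if j = z then (0:Fin 2) else f j) (List.finRange n)).sum
      = sF f + f z := by
    rw [← Fin.sum_univ_def]
    have h0 : (∑ j : Fin n, if j = z then (0:Fin 2) else f j)
        = ∑ j : Fin n, if j = z then (0:Fin 2) else f j + 0 := by simp
    rw [h0, sum_ite_odd ho, zero_add]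
  by_cases hk : k = z
  · have e1 : ¬(k ≠ z ∧ k ∈ List.finRange n) := fun h => h.1 hk
    rw [if_neg e1]
    simp only [if_pos hk, hsum, σm, if_true, ite_true]
    have : ∀ a s : Fin 2, a + (s + a) = s := by decide
    exact this _ _
  · rw [if_pos ⟨hk, List.mem_finRange k⟩]
    simp only [if_neg hk, if_pos rfl, hsum, σm, if_true, ite_true]
    have : ∀ a c s : Fin 2, a + (c + (s + c)) = a + s := by decide
    exact this _ _ _

lemma onFirst_X (hn : 0 < n) : (onFirst hn Xmat : NMat n) = pm (φm ⟨0, hn⟩) := by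
  set z : Fin n := ⟨0, hn⟩ with hz
  funext g f
  show Xmat (g z) (f z) * (if ∀ j : Fin n, j ≠ z → g j = f j then 1 else 0)
      = pm (φm z) g f
  by_cases hA : ∀ j : Fin n, j ≠ z → g j = f j
  · by_cases hB : g z = f z + 1
    · have hg : g = φm z f := by
        funext k
        by_cases hk : k = z
        · subst hk; simp only [φm, if_pos rfl]; exact hB
        · simp only [φm, if_neg hk]; exact hA k hk
      rw [hx, if_pos hB, if_pos hA, one_mul]
      simp [pm, hg]
    · have hg : g ≠ φm z f := by
        intro h
        exact hB (by rw [h]; simp [φm])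
      rw [hx, if_neg hB, zero_mul]
      simp [pm, hg]
  · have hg : g ≠ φm z f := by
      intro h
      apply hA
      intro j hj
      rw [h]; simp [φm, hj]
    rw [if_neg hA, mul_zero]
    simp [pm, hg]

lemma onFirst_Z (hn : 0 < n) :
    (onFirst hn Zmat : NMat n) = Dm (fun f => dz (f ⟨0, hn⟩)) := by
  set z : Fin n := ⟨0, hn⟩ with hz
  funext g f
  show Zmat (g z) (f z) * (if ∀ j : Fin n, j ≠ z → g j = f j then 1 else 0)
      = Dm (fun f => dz (f z)) g f
  by_cases hA : ∀ j : Fin n, j ≠ z → g j = f j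
  · by_cases hB : g z = f z
    · have hg : g = f := by
        funext k
        by_cases hk : k = z
        · subst hk; exact hB
        · exact hA k hk
      simp [Dm, hg, hA, hz1]
    · have hg : g ≠ f := fun h => hB (by rw [h])
      simp [Dm, hg, hA, hz2 _ _ hB]
  · have hg : g ≠ f := fun h => hA (fun j _ => by rw [h])
    simp [Dm, hg, hA]

lemma kronPow_X : (kronPow Xmat : NMat n) = pm (fun f k => f k + 1) := by
  funext g f
  show (∏ j : Fin n, Xmat (g j) (f j)) = pm (fun f k => f k + 1) g f
  have h1 : (∏ j : Fin n, Xmat (g j) (f j))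
      = ∏ j : Fin n, if g j = f j + 1 then 1 else 0 :=
    Finset.prod_congr rfl fun j _ => hx (g j) (f j)
  rw [h1, Finset.prod_boole]
  have h2 : (∀ j ∈ Finset.univ, g j = f j + 1) ↔ g = fun k => f k + 1 :=
    ⟨fun h => funext fun k => h k (Finset.mem_univ k), fun h k _ => congrFun h k⟩
  simp only [pm, h2]

lemma kronPow_Z : (kronPow Zmat : NMat n) = Dm (fun f => dz (sF f)) := by
  funext g f
  show (∏ j : Fin n, Zmat (g j) (f j)) = Dm (fun f => dz (sF f)) g f
  by_cases hgf : g = f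
  · subst hgf
    have h1 : (∏ j : Fin n, Zmat (g j) (g j)) = ∏ j : Fin n, dz (g j) :=
      Finset.prod_congr rfl fun j _ => hz1 (g j)
    rw [h1, prod_dz]
    simp [Dm, sF]
  · have : ∃ j, g j ≠ f j := by
      by_contra h
      push_neg at h
      exact hgf (funext h)
    obtain ⟨j, hj⟩ := this
    rw [Finset.prod_eq_zero (Finset.mem_univ j) (hz2 _ _ hj)]
    simp [Dm, hgf]

end TransAux

/-- **Transversality of the logical X and Z operators.**
For odd positive `n` and the `n`-qubit encoding unitary `U`,
`U†·(X ⊗ I^{⊗(n−1)})·U = X^{⊗n}`, `U·(X ⊗ I^{⊗(n−1)})·U† = X^{⊗n}`, and likewise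
`U†·(Z ⊗ I^{⊗(n−1)})·U = Z^{⊗n}`, `U·(Z ⊗ I^{⊗(n−1)})·U† = Z^{⊗n}`. -/
theorem logical_XZ_transversal (n : ℕ) (hn : 0 < n) (hodd : Odd n) :
    (encU n hn)ᴴ * onFirst hn Xmat * encU n hn = kronPow Xmat ∧
      encU n hn * onFirst hn Xmat * (encU n hn)ᴴ = kronPow Xmat ∧
      (encU n hn)ᴴ * onFirst hn Zmat * encU n hn = kronPow Zmat ∧
      encU n hn * onFirst hn Zmat * (encU n hn)ᴴ = kronPow Zmat := by
  classical
  set z : Fin n := ⟨0, hn⟩ with hz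
  have hU : encU n hn = TransAux.pm (TransAux.σm z) := TransAux.encU_eq hn hodd
  have hUH : (encU n hn)ᴴ = TransAux.pm (TransAux.τm z) := by
    rw [hU]
    exact TransAux.pm_conj _ _ (TransAux.invA hodd z) (TransAux.invB hodd z)
  refine ⟨?_, ?_, ?_, ?_⟩
  · rw [hUH, hU, TransAux.onFirst_X hn, TransAux.pm_mul_pm, TransAux.pm_mul_pm,
      TransAux.kronPow_X]
    exact TransAux.pm_congr fun f k => congrFun (TransAux.flipA hodd z f) k
  · rw [hUH, hU, TransAux.onFirst_X hn, TransAux.pm_mul_pm, TransAux.pm_mul_pm,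
      TransAux.kronPow_X]
    exact TransAux.pm_congr fun f k => congrFun (TransAux.flipB hodd z f) k
  · rw [hUH, hU, TransAux.onFirst_Z hn, TransAux.kronPow_Z,
      TransAux.pm_Dm_pm _ _ _ (TransAux.invA hodd z)]
    have : (fun f : NState n => TransAux.dz (TransAux.σm z f z))
        = fun f => TransAux.dz (TransAux.sF f) := by
      funext f; simp [TransAux.σm]
    rw [this]
  · rw [hUH, hU, TransAux.onFirst_Z hn, TransAux.kronPow_Z,
      TransAux.pm_Dm_pm _ _ _ (TransAux.invB hodd z)]
    have : (fun f : NState n => TransAux.dz (TransAux.τm z f z))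
        = fun f => TransAux.dz (TransAux.sF f) := by
      funext f; simp [TransAux.τm]
    rw [this]


end
end

section
/- Transversality of the logical Y operator: let n be an odd positive integer and let U be the n-qubit encoding unitary. Then U†·(Y ⊗ I^{⊗(n−1)})·U = i^{1−n}·Y^{⊗n}. In particular, if n ≡ 1 (mod 4), then U†·(Y ⊗ I^{⊗(n−1)})·U = Y^{⊗n} and also U·(Y ⊗ I^{⊗(n−1)})·U† = Y^{⊗n}. -/
open Matrix

noncomputable section

/-- The Pauli `Y` matrix. -/
def Ymat : Matrix (Fin 2) (Fin 2) ℂ := !![0, -Complex.I; Complex.I, 0]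

def permMat {n : ℕ} (T : NState n → NState n) : NMat n := fun g f => if g = T f then 1 else 0

lemma permMat_id {n : ℕ} : permMat (id : NState n → NState n) = 1 := by
  ext g f; simp [permMat, Matrix.one_apply]

lemma permMat_mul {n : ℕ} (T S : NState n → NState n) :
    permMat T * permMat S = permMat (T ∘ S) := by
  ext g f
  simp [Matrix.mul_apply, permMat, Function.comp, mul_ite, ite_mul, mul_one, mul_zero,
    Finset.sum_ite_eq, Finset.sum_ite_eq']

lemma prod_permMat {n : ℕ} (l : List (NState n → NState n)) :
    (l.map permMat).prod = permMat (l.foldr (· ∘ ·) id) := by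
  induction l with
  | nil => simp [permMat_id]
  | cons a l ih => simp [ih, permMat_mul]

def cfun {n : ℕ} (c t : Fin n) : NState n → NState n := fun f => Function.update f t (f t + f c)

lemma nCNOT_eq {n : ℕ} (c t : Fin n) : nCNOT c t = permMat (cfun c t) := rfl

lemma mul_permMat {n : ℕ} (M : NMat n) (T : NState n → NState n) (g f : NState n) : (M * permMat T) g f = M g (T f) := by
  simp [Matrix.mul_apply, permMat, mul_ite, mul_one, mul_zero]

lemma permMatH_mul {n : ℕ} (T : NState n → NState n) (M : NMat n) (g f : NState n) : ((permMat T)ᴴ * M) g f = M (T g) f := by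
  simp [Matrix.mul_apply, permMat, Matrix.conjTranspose_apply, apply_ite (starRingEnd ℂ),
    ite_mul, one_mul, zero_mul, eq_comm]

lemma conj_permMat {n : ℕ} (T : NState n → NState n) (M : NMat n) (g f : NState n) :
    ((permMat T)ᴴ * M * permMat T) g f = M (T g) (T f) := by
  rw [mul_permMat, permMatH_mul]

lemma foldr_in {n : ℕ} (z : Fin n) (l : List (Fin n)) (f : NState n) :
    l.foldr (fun j acc => (if j = z then id else cfun j z) ∘ acc) id f
      = Function.update f z (f z + (l.map (fun j => if j = z then 0 else f j)).sum) := by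
  induction l with
  | nil => simp
  | cons j l ih =>
    simp only [List.foldr_cons, Function.comp_apply, ih, List.map_cons, List.sum_cons]
    by_cases hj : j = z
    · simp [hj]
    · simp only [if_neg hj, cfun, Function.update_self, Function.update_idem,
        Function.update_of_ne hj]
      abel_nf

lemma foldr_out {n : ℕ} (z : Fin n) (l : List (Fin n)) (hl : l.Nodup) (f : NState n) (k : Fin n) :
    l.foldr (fun j acc => (if j = z then id else cfun z j) ∘ acc) id f k
      = if k ≠ z ∧ k ∈ l then f k + f z else f k := by
  induction l generalizing k with
  | nil => simp
  | cons j l ih =>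
    obtain ⟨hj, hl'⟩ := List.nodup_cons.mp hl
    have gz : l.foldr (fun j acc => (if j = z then id else cfun z j) ∘ acc) id f z = f z := by
      simp [ih hl' z]
    simp only [List.foldr_cons, Function.comp_apply]
    by_cases hjz : j = z
    · subst hjz
      rw [if_pos rfl, id_eq, ih hl' k]
      by_cases hk : k = j
      · simp [hk]
      · simp [hk, List.mem_cons]
    · rw [if_neg hjz]
      show Function.update _ j _ k = _
      by_cases hk : k = j
      · subst hk
        rw [Function.update_self, gz, ih hl' k, if_neg (by simp [hj]), if_pos ⟨hjz, by simp⟩]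
      · rw [Function.update_of_ne hk, ih hl' k]
        by_cases hkz : k = z
        · simp [hkz]
        · simp only [ne_eq, hkz, not_false_eq_true, true_and, List.mem_cons, hk, false_or]


def Tfun {n : ℕ} (z : Fin n) : NState n → NState n :=
  fun f k => (if k = z then 0 else f k) + ∑ j, f j

lemma sum_univ_split {n : ℕ} (z : Fin n) (f : NState n) :
    f z + ∑ j, (if j = z then (0 : Fin 2) else f j) = ∑ j, f j := by
  have h1 : ∀ j : Fin n, (if j = z then (0:Fin 2) else f j)
      = f j - (if j = z then f j else 0) := by
    intro j; split_ifs <;> simp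
  rw [Finset.sum_congr rfl (fun j _ => h1 j), Finset.sum_sub_distrib,
    Finset.sum_ite_eq' Finset.univ z f, if_pos (Finset.mem_univ z)]
  abel

lemma encU_eq (n : ℕ) (hn : 0 < n) : encU n hn = permMat (Tfun (⟨0, hn⟩ : Fin n)) := by
  set z : Fin n := ⟨0, hn⟩
  have h1 : (fun j => if j = z then (1 : NMat n) else nCNOT z j)
      = fun j => permMat (if j = z then id else cfun z j) := by
    funext j; split_ifs <;> simp [permMat_id, nCNOT_eq]
  have h2 : (fun j => if j = z then (1 : NMat n) else nCNOT j z)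
      = fun j => permMat (if j = z then id else cfun j z) := by
    funext j; split_ifs <;> simp [permMat_id, nCNOT_eq]
  rw [encU, h1, h2]
  rw [show (List.finRange n).map (fun j => permMat (if j = z then id else cfun z j))
      = ((List.finRange n).map (fun j => if j = z then id else cfun z j)).map permMat by
    rw [List.map_map]; rfl]
  rw [show (List.finRange n).map (fun j => permMat (if j = z then id else cfun j z))
      = ((List.finRange n).map (fun j => if j = z then id else cfun j z)).map permMat by
    rw [List.map_map]; rfl]
  rw [prod_permMat, prod_permMat, permMat_mul, List.foldr_map, List.foldr_map]
  refine congrArg permMat ?_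
  funext f k
  rw [Function.comp_apply]
  rw [foldr_in z (List.finRange n) f]
  rw [foldr_out z (List.finRange n) (List.nodup_finRange n)]
  have hs : (List.map (fun j => if j = z then (0:Fin 2) else f j) (List.finRange n)).sum
      = ∑ j, (if j = z then (0:Fin 2) else f j) := by
    rw [Fin.sum_univ_def]
  rw [hs]
  by_cases hk : k = z
  · subst hk
    simp [Tfun, Function.update_self, sum_univ_split]
  · rw [if_pos ⟨hk, List.mem_finRange k⟩]
    rw [Function.update_of_ne hk, Function.update_self, Tfun]
    rw [if_neg hk]
    rw [← sum_univ_split z f]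

namespace F2
lemma addself : ∀ x : Fin 2, x + x = 0 := by decide
lemma ne_iff : ∀ a b : Fin 2, a ≠ b ↔ a = b + 1 := by decide
lemma sum1 : ∀ a b : Fin 2, a + b = 1 → a = b + 1 := by decide
lemma eq1 : ∀ a b : Fin 2, a = b + 1 → a + b = 1 := by decide
lemma x1x : ∀ x : Fin 2, (x + 1) + x = 1 := by decide
lemma addadd : ∀ a b : Fin 2, (a + 1) + (b + 1) = a + b := by decide
lemma cancel : ∀ a b s t : Fin 2, t = s + 1 → a + t = b + s → a = b + 1 := by decide
lemma rearr : ∀ a b c d : Fin 2, a + c = b + d → a + b = c + d := by decide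
lemma notadd1 : ∀ x y : Fin 2, x ≠ y + 1 → x = y := by decide
lemma cancel2 : ∀ a b : Fin 2, (a + b) + b = a := by decide
lemma solve : ∀ x y : Fin 2, x + (x - y) = y := by decide
lemma ab0s : ∀ a s : Fin 2, (a + s) + (0 + s) = a := by decide
end F2

lemma even_nsmul_f2 {m : ℕ} (hm : Even m) (c : Fin 2) : m • c = 0 := by
  obtain ⟨k, rfl⟩ := hm
  rw [add_nsmul]
  exact F2.addself _

lemma sum_aux {n : ℕ} (hodd : Odd n) (z : Fin n) (F g : NState n) (c : Fin 2)
    (hz : F z = ∑ j, g j) (hk : ∀ k, k ≠ z → F k = g k + c) :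
    ∑ k, F k = g z := by
  rw [← Finset.add_sum_erase _ F (Finset.mem_univ z), hz,
    Finset.sum_congr rfl (fun k hkk => hk k (Finset.ne_of_mem_erase hkk)),
    Finset.sum_add_distrib, Finset.sum_const, Finset.card_erase_of_mem (Finset.mem_univ z),
    Finset.card_univ, Fintype.card_fin, even_nsmul_f2 (Nat.Odd.sub_odd hodd odd_one) c,
    add_zero, Finset.sum_erase_eq_sub (Finset.mem_univ z)]
  exact F2.solve _ _

lemma sum_shift {n : ℕ} (hodd : Odd n) (z : Fin n) (g f : NState n) (c : Fin 2)
    (hp : ∀ j, j ≠ z → g j + f j = c) :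
    (∑ j, g j) + (∑ j, f j) = g z + f z := by
  rw [← Finset.sum_add_distrib, ← Finset.add_sum_erase _ _ (Finset.mem_univ z),
    Finset.sum_congr rfl (fun j hj => hp j (Finset.ne_of_mem_erase hj)),
    Finset.sum_const, Finset.card_erase_of_mem (Finset.mem_univ z), Finset.card_univ,
    Fintype.card_fin, even_nsmul_f2 (Nat.Odd.sub_odd hodd odd_one) c, add_zero]

def Tinv {n : ℕ} (z : Fin n) : NState n → NState n :=
  fun g k => if k = z then ∑ j, g j else g k + g z

lemma Tfun_apply_z {n : ℕ} (z : Fin n) (f : NState n) : Tfun z f z = ∑ j, f j := by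
  simp [Tfun]

lemma Tinv_apply_z {n : ℕ} (z : Fin n) (g : NState n) : Tinv z g z = ∑ j, g j := by
  simp [Tinv]

lemma sum_Tfun {n : ℕ} (hodd : Odd n) (z : Fin n) (f : NState n) :
    ∑ k, Tfun z f k = f z :=
  sum_aux hodd z _ f (∑ j, f j) (Tfun_apply_z z f)
    (fun k hk => by simp [Tfun, hk])

lemma sum_Tinv {n : ℕ} (hodd : Odd n) (z : Fin n) (g : NState n) :
    ∑ k, Tinv z g k = g z :=
  sum_aux hodd z _ g (g z) (Tinv_apply_z z g)
    (fun k hk => by simp [Tinv, hk])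

lemma Tinv_Tfun {n : ℕ} (hodd : Odd n) (z : Fin n) (f : NState n) :
    Tinv z (Tfun z f) = f := by
  funext k
  by_cases hk : k = z
  · subst hk
    rw [Tinv_apply_z, sum_Tfun hodd]
  · show Tinv z (Tfun z f) k = f k
    rw [Tinv, if_neg hk]
    show Tfun z f k + Tfun z f z = f k
    rw [Tfun_apply_z, Tfun, if_neg hk]
    exact F2.cancel2 _ _

lemma Tfun_Tinv {n : ℕ} (hodd : Odd n) (z : Fin n) (g : NState n) :
    Tfun z (Tinv z g) = g := by
  funext k
  by_cases hk : k = z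
  · subst hk
    rw [Tfun_apply_z, sum_Tinv hodd]
  · show Tfun z (Tinv z g) k = g k
    rw [Tfun, if_neg hk, sum_Tinv hodd]
    show Tinv z g k + g z = g k
    rw [Tinv, if_neg hk]
    exact F2.cancel2 _ _

lemma permMat_conjT {n : ℕ} (hodd : Odd n) (z : Fin n) :
    (permMat (Tfun z))ᴴ = permMat (Tinv z) := by
  ext g f
  rw [Matrix.conjTranspose_apply]
  show star (if f = Tfun z g then (1:ℂ) else 0) = if g = Tinv z f then 1 else 0
  by_cases h : f = Tfun z g
  · rw [if_pos h, if_pos (by rw [h, Tinv_Tfun hodd]), star_one]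
  · rw [if_neg h, if_neg (fun hg => h (by rw [hg, Tfun_Tinv hodd])), star_zero]

lemma Ymat_diag (x : Fin 2) : Ymat x x = 0 := by
  fin_cases x <;> simp [Ymat]

lemma Ymat_succ (x : Fin 2) : Ymat (x + 1) x = Complex.I * (-1 : ℂ) ^ (x : ℕ) := by
  fin_cases x
  · show Ymat 1 0 = Complex.I * (-1 : ℂ) ^ ((0 : Fin 2) : ℕ)
    norm_num [Ymat]
  · show Ymat 0 1 = Complex.I * (-1 : ℂ) ^ ((1 : Fin 2) : ℕ)
    norm_num [Ymat]

lemma neg_one_pow_add (a b : Fin 2) :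
    ((-1 : ℂ)) ^ (((a + b) : Fin 2) : ℕ) = (-1) ^ (a : ℕ) * (-1) ^ (b : ℕ) := by
  fin_cases a <;> fin_cases b
  · show ((-1 : ℂ)) ^ ((0 : Fin 2) : ℕ) = (-1) ^ ((0:Fin 2) : ℕ) * (-1) ^ ((0:Fin 2) : ℕ); norm_num
  · show ((-1 : ℂ)) ^ ((1 : Fin 2) : ℕ) = (-1) ^ ((0:Fin 2) : ℕ) * (-1) ^ ((1:Fin 2) : ℕ); norm_num
  · show ((-1 : ℂ)) ^ ((1 : Fin 2) : ℕ) = (-1) ^ ((1:Fin 2) : ℕ) * (-1) ^ ((0:Fin 2) : ℕ); norm_num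
  · show ((-1 : ℂ)) ^ ((0 : Fin 2) : ℕ) = (-1) ^ ((1:Fin 2) : ℕ) * (-1) ^ ((1:Fin 2) : ℕ); norm_num

lemma prod_neg_one {n : ℕ} (f : NState n) :
    ∏ j, ((-1 : ℂ)) ^ ((f j : ℕ)) = (-1) ^ (((∑ j, f j) : Fin 2) : ℕ) := by
  induction (Finset.univ : Finset (Fin n)) using Finset.cons_induction with
  | empty => simp
  | cons a s ha ih => rw [Finset.prod_cons, Finset.sum_cons, ih, neg_one_pow_add]

lemma core {n : ℕ} (hn : 0 < n) (hodd : Odd n) (g f a b : NState n)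
    (haz : a ⟨0, hn⟩ = ∑ j, g j) (hbz : b ⟨0, hn⟩ = ∑ j, f j)
    (hc1 : (∀ j, j ≠ ⟨0, hn⟩ → a j = b j) →
      (∀ j, g j = f j + 1) ∨ (∑ j, g j) = ∑ j, f j)
    (hc2 : (∀ j, g j = f j + 1) → ∀ j, j ≠ ⟨0, hn⟩ → a j = b j) :
    onFirst hn Ymat a b = Complex.I ^ ((1 : ℤ) - (n : ℤ)) * ∏ j, Ymat (g j) (f j) := by
  by_cases hall : ∀ j, g j = f j + 1
  · have hgz : g ⟨0, hn⟩ + f ⟨0, hn⟩ = 1 := by rw [hall]; exact F2.x1x _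
    have hsum : (∑ j, g j) = (∑ j, f j) + 1 := by
      refine F2.sum1 _ _ ?_
      rw [sum_shift hodd ⟨0, hn⟩ g f 1 (fun j _ => by rw [hall j]; exact F2.x1x _)]
      exact hgz
    rw [onFirst, if_pos (hc2 hall), mul_one, haz, hbz, hsum, Ymat_succ]
    have hprod : ∏ j, Ymat (g j) (f j)
        = (Complex.I) ^ n * ((-1 : ℂ)) ^ (((∑ j, f j) : Fin 2) : ℕ) := by
      calc ∏ j, Ymat (g j) (f j) = ∏ j, (Complex.I * ((-1 : ℂ)) ^ ((f j : ℕ))) :=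
            Finset.prod_congr rfl fun j _ => by rw [hall j, Ymat_succ]
        _ = (∏ _j : Fin n, Complex.I) * ∏ j, ((-1 : ℂ)) ^ ((f j : ℕ)) :=
            Finset.prod_mul_distrib
        _ = _ := by
            rw [Finset.prod_const, Finset.card_univ, Fintype.card_fin, prod_neg_one]
    rw [hprod, ← mul_assoc]
    have hI : Complex.I ^ ((1 : ℤ) - (n : ℤ)) * Complex.I ^ n = Complex.I := by
      rw [← zpow_natCast, ← zpow_add₀ Complex.I_ne_zero,
        show (1 : ℤ) - n + n = 1 by ring, zpow_one]
    rw [hI]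
  · have hprod0 : ∏ j, Ymat (g j) (f j) = 0 := by
      push_neg at hall
      obtain ⟨j0, hj0⟩ := hall
      exact Finset.prod_eq_zero (Finset.mem_univ j0)
        (by rw [F2.notadd1 _ _ hj0]; exact Ymat_diag _)
    rw [hprod0, mul_zero, onFirst]
    by_cases hcnd : ∀ j, j ≠ (⟨0, hn⟩ : Fin n) → a j = b j
    · rcases hc1 hcnd with h | h
      · exact absurd h hall
      · rw [if_pos hcnd, mul_one, haz, hbz, h, Ymat_diag]
    · rw [if_neg hcnd, mul_zero]


/-- **Transversality of the logical Y operator.**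
For odd positive `n` and the `n`-qubit encoding unitary `U`,
`U†·(Y ⊗ I^{⊗(n−1)})·U = i^{1−n}·Y^{⊗n}`; in particular if `n ≡ 1 (mod 4)` then
`U†·(Y ⊗ I^{⊗(n−1)})·U = Y^{⊗n}` and also `U·(Y ⊗ I^{⊗(n−1)})·U† = Y^{⊗n}`. -/
theorem logical_Y_transversal (n : ℕ) (hn : 0 < n) (hodd : Odd n) :
    (encU n hn)ᴴ * onFirst hn Ymat * encU n hn =
        (Complex.I ^ ((1 : ℤ) - (n : ℤ))) • kronPow Ymat ∧
      (n % 4 = 1 →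
        (encU n hn)ᴴ * onFirst hn Ymat * encU n hn = kronPow Ymat ∧
          encU n hn * onFirst hn Ymat * (encU n hn)ᴴ = kronPow Ymat) := by
  have key1 : (encU n hn)ᴴ * onFirst hn Ymat * encU n hn
      = (Complex.I ^ ((1 : ℤ) - (n : ℤ))) • kronPow Ymat := by
    rw [encU_eq]
    ext g f
    rw [conj_permMat, Matrix.smul_apply, kronPow, smul_eq_mul]
    refine core hn hodd g f _ _ (Tfun_apply_z _ g) (Tfun_apply_z _ f) ?_ ?_
    · intro hcnd
      by_cases hS : (∑ j, g j) = ∑ j, f j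
      · exact Or.inr hS
      · left
        have hS1 : (∑ j, g j) = (∑ j, f j) + 1 := (F2.ne_iff _ _).1 hS
        have hne : ∀ j, j ≠ (⟨0, hn⟩ : Fin n) → g j = f j + 1 := by
          intro j hj
          have h := hcnd j hj
          rw [Tfun, Tfun, if_neg hj, if_neg hj] at h
          exact F2.cancel _ _ _ _ hS1 h
        intro j
        by_cases hj : j = (⟨0, hn⟩ : Fin n)
        · rw [hj]
          have hsh := sum_shift hodd (⟨0, hn⟩ : Fin n) g f 1
            (fun k hk => by rw [hne k hk]; exact F2.x1x _)
          have h1 := F2.eq1 _ _ hS1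
          rw [hsh] at h1
          exact F2.sum1 _ _ h1
        · exact hne j hj
    · intro hall j hj
      have hsum : (∑ j, g j) = (∑ j, f j) + 1 := by
        refine F2.sum1 _ _ ?_
        rw [sum_shift hodd ⟨0, hn⟩ g f 1 (fun k _ => by rw [hall k]; exact F2.x1x _), hall]
        exact F2.x1x _
      rw [Tfun, Tfun, if_neg hj, if_neg hj, hall j, hsum]
      exact F2.addadd _ _
  have key2 : encU n hn * onFirst hn Ymat * (encU n hn)ᴴ
      = (Complex.I ^ ((1 : ℤ) - (n : ℤ))) • kronPow Ymat := by
    rw [encU_eq, permMat_conjT hodd,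
      show permMat (Tfun (⟨0, hn⟩ : Fin n)) = (permMat (Tinv ⟨0, hn⟩))ᴴ by
        rw [← permMat_conjT hodd, conjTranspose_conjTranspose]]
    ext g f
    rw [conj_permMat, Matrix.smul_apply, kronPow, smul_eq_mul]
    refine core hn hodd g f _ _ (Tinv_apply_z _ g) (Tinv_apply_z _ f) ?_ ?_
    · intro hcnd
      by_cases hS : (∑ j, g j) = ∑ j, f j
      · exact Or.inr hS
      · left
        have hS1 : (∑ j, g j) = (∑ j, f j) + 1 := (F2.ne_iff _ _).1 hS
        have hcnd' : ∀ j, j ≠ (⟨0, hn⟩ : Fin n) →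
            g j + g ⟨0, hn⟩ = f j + f ⟨0, hn⟩ := by
          intro j hj
          have h := hcnd j hj
          rwa [Tinv, Tinv, if_neg hj, if_neg hj] at h
        have hsh := sum_shift hodd (⟨0, hn⟩ : Fin n) g f (g ⟨0, hn⟩ + f ⟨0, hn⟩)
          (fun j hj => F2.rearr _ _ _ _ (hcnd' j hj))
        have h1 := F2.eq1 _ _ hS1
        rw [hsh] at h1
        have hz' : g ⟨0, hn⟩ = f ⟨0, hn⟩ + 1 := F2.sum1 _ _ h1
        intro j
        by_cases hj : j = (⟨0, hn⟩ : Fin n)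
        · subst hj; exact hz'
        · exact F2.cancel _ _ _ _ hz' (hcnd' j hj)
    · intro hall j hj
      rw [Tinv, Tinv, if_neg hj, if_neg hj, hall j, hall ⟨0, hn⟩]
      exact F2.addadd _ _
  have hI4 : n % 4 = 1 → Complex.I ^ ((1 : ℤ) - (n : ℤ)) = 1 := by
    intro h4
    have he : (1 : ℤ) - (n : ℤ) = 4 * (-(n / 4 : ℕ)) := by omega
    rw [he, _root_.zpow_mul, show ((4:ℤ)) = ((4:ℕ):ℤ) by norm_num, zpow_natCast,
      Complex.I_pow_four, _root_.one_zpow]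
  exact ⟨key1, fun h4 => ⟨by rw [key1, hI4 h4, one_smul],
    by rw [key2, hI4 h4, one_smul]⟩⟩


end
end

section
/- Pauli support of an encoded single row: let n ≡ 1 (mod 4) be a positive integer, let U be the n-qubit encoding unitary, and let ψ be any 2×2 complex matrix. Then U·(ψ ⊗ (I/2)^{⊗(n−1)})·U† = 2^{−n} · Σ_{k=0}^{3} tr(σ_k ψ) · σ_k^{⊗n}, where σ_0 = I, σ_1 = X, σ_2 = Y, σ_3 = Z. -/
open Matrix

noncomputable section

/-- The Pauli matrices `σ₀ = I`, `σ₁ = X`, `σ₂ = Y`, `σ₃ = Z`. -/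
def pauli : Fin 4 → Matrix (Fin 2) (Fin 2) ℂ := ![1, Xmat, Ymat, Zmat]

/-- `ψ ⊗ (I/2)^{⊗(n−1)}`: the single-qubit operator `ψ` on qubit 1 tensored with the
maximally mixed state on qubits `2,…,n`. -/
def mixExt (n : ℕ) (hn : 0 < n) (ψ : Matrix (Fin 2) (Fin 2) ℂ) : NMat n :=
  fun g f => ψ (g ⟨0, hn⟩) (f ⟨0, hn⟩) *
    (if ∀ j : Fin n, j ≠ ⟨0, hn⟩ → g j = f j then ((1 : ℂ) / 2) ^ (n - 1) else 0)

/-- Permutation-style matrix of a function on basis states. -/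
def PMat {n : ℕ} (σ : NState n → NState n) : NMat n :=
  fun g f => if g = σ f then 1 else 0

def cnotFun {n : ℕ} (c t : Fin n) (f : NState n) : NState n :=
  Function.update f t (f t + f c)

lemma nCNOT_eq_PMat {n : ℕ} (c t : Fin n) : nCNOT c t = PMat (cnotFun c t) := rfl

lemma PMat_id {n : ℕ} : PMat (id : NState n → NState n) = 1 := by
  ext g f; simp [PMat, Matrix.one_apply]

lemma PMat_mul {n : ℕ} (α β : NState n → NState n) :
    PMat α * PMat β = PMat (α ∘ β) := by
  ext g f
  simp only [PMat, Matrix.mul_apply, Function.comp_apply]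
  rw [Finset.sum_eq_single (β f)]
  · simp
  · intro h _ hne; simp [hne]
  · simp

lemma prod_PMat {n : ℕ} (F : Fin n → NState n → NState n) (l : List (Fin n)) :
    ((l.map fun j => PMat (F j)).prod) = PMat (l.foldr (fun j σ => F j ∘ σ) id) := by
  induction l with
  | nil => simp [PMat_id]
  | cons j l ih => simp [ih, PMat_mul]
lemma fin2_add_self : ∀ x : Fin 2, x + x = 0 := by decide

lemma foldr_cnot_to_z {n : ℕ} (z : Fin n) (l : List (Fin n)) (f : NState n) :
    (l.foldr (fun j σ => (if j = z then id else cnotFun j z) ∘ σ) id) f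
      = Function.update f z (f z + (l.map fun j => if j = z then 0 else f j).sum) := by
  induction l with
  | nil => simp
  | cons j l ih =>
    simp only [List.foldr_cons, Function.comp_apply, ih, List.map_cons, List.sum_cons]
    by_cases hj : j = z
    · simp [hj]
    · simp only [if_neg hj, cnotFun]
      rw [Function.update_self, Function.update_of_ne hj, Function.update_idem]
      have h : ∀ a b c : Fin 2, a + b + c = a + (c + b) := by decide
      rw [h]

lemma foldr_cnot_from_z {n : ℕ} (z : Fin n) (l : List (Fin n)) (hl : l.Nodup) (f : NState n) :
    (l.foldr (fun j σ => (if j = z then id else cnotFun z j) ∘ σ) id) f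
      = fun i => if i ≠ z ∧ i ∈ l then f i + f z else f i := by
  induction l with
  | nil => simp
  | cons j l ih =>
    obtain ⟨hjl, hl'⟩ := List.nodup_cons.mp hl
    simp only [List.foldr_cons, Function.comp_apply, ih hl']
    by_cases hj : j = z
    · subst hj
      funext i
      simp only [id_eq, List.mem_cons]
      by_cases hij : i = j
      · simp [hij]
      · by_cases him : i ∈ l <;> simp [hij, him]
    · funext i
      simp only [if_neg hj, cnotFun]
      by_cases hij : i = j
      · subst hij
        rw [Function.update_self]
        simp [hjl, hj]
      · rw [Function.update_of_ne hij]
        simp only [List.mem_cons]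
        by_cases hiz : i = z
        · simp [hiz]
        · by_cases him : i ∈ l <;> simp [hiz, him, hij]
/-- Parity sum of a state. -/
def sQ {n : ℕ} (f : NState n) : Fin 2 := ∑ j, f j

def encFun (n : ℕ) (hn : 0 < n) (f : NState n) : NState n :=
  fun i => if i = ⟨0, hn⟩ then sQ f else f i + sQ f

def decFun (n : ℕ) (hn : 0 < n) (g : NState n) : NState n :=
  fun i => if i = ⟨0, hn⟩ then sQ g else g i + g ⟨0, hn⟩

lemma even_nsmul_fin2 (k : ℕ) (x : Fin 2) : (2 * k) • x = 0 := by
  induction k with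
  | zero => simp
  | succ m ih =>
    rw [Nat.mul_succ, add_nsmul, ih, zero_add, two_nsmul, fin2_add_self]

lemma sum_ite_z {n : ℕ} (z : Fin n) (A : Fin 2) (B : Fin n → Fin 2) :
    ∑ i, (if i = z then A else B i) = A + ∑ i ∈ Finset.univ.erase z, B i := by
  rw [← Finset.add_sum_erase _ _ (Finset.mem_univ z), if_pos rfl]
  congr 1
  exact Finset.sum_congr rfl fun i hi => if_neg (Finset.ne_of_mem_erase hi)

lemma erase_sum_add {n : ℕ} (z : Fin n) (B : Fin n → Fin 2) (c : Fin 2)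
    (hpar : (n - 1) % 2 = 0) :
    ∑ i ∈ Finset.univ.erase z, (B i + c) = ∑ i ∈ Finset.univ.erase z, B i := by
  rw [Finset.sum_add_distrib, Finset.sum_const]
  have hcard : (Finset.univ.erase z).card = n - 1 := by
    rw [Finset.card_erase_of_mem (Finset.mem_univ z)]; simp
  rw [hcard, show n - 1 = 2 * ((n - 1) / 2) by omega, even_nsmul_fin2, add_zero]

lemma sum_erase_z {n : ℕ} (z : Fin n) (f : NState n) :
    sQ f = f z + ∑ i ∈ Finset.univ.erase z, f i :=
  (Finset.add_sum_erase _ _ (Finset.mem_univ z)).symm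

lemma fin2_helper1 : ∀ a b c : Fin 2, a = c + b → a + b = c := by decide

lemma sQ_encFun {n : ℕ} (hn : 0 < n) (hpar : (n - 1) % 2 = 0) (f : NState n) :
    sQ (encFun n hn f) = f ⟨0, hn⟩ := by
  set z : Fin n := ⟨0, hn⟩
  show (∑ i, (if i = z then sQ f else f i + sQ f)) = f z
  rw [sum_ite_z, erase_sum_add _ _ _ hpar]
  exact fin2_helper1 _ _ _ (sum_erase_z z f)

lemma sQ_decFun {n : ℕ} (hn : 0 < n) (hpar : (n - 1) % 2 = 0) (g : NState n) :
    sQ (decFun n hn g) = g ⟨0, hn⟩ := by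
  set z : Fin n := ⟨0, hn⟩
  show (∑ i, (if i = z then sQ g else g i + g z)) = g z
  rw [sum_ite_z, erase_sum_add _ _ _ hpar]
  exact fin2_helper1 _ _ _ (sum_erase_z z g)

lemma fin2_helper2 : ∀ a b : Fin 2, a + b + b = a := by decide

lemma enc_dec {n : ℕ} (hn : 0 < n) (hpar : (n - 1) % 2 = 0) (g : NState n) :
    encFun n hn (decFun n hn g) = g := by
  funext i
  simp only [encFun]
  by_cases hi : i = ⟨0, hn⟩
  · rw [if_pos hi, sQ_decFun hn hpar, hi]
  · rw [if_neg hi, sQ_decFun hn hpar]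
    show (if i = ⟨0, hn⟩ then sQ g else g i + g ⟨0, hn⟩) + g ⟨0, hn⟩ = g i
    rw [if_neg hi, fin2_helper2]

lemma dec_enc {n : ℕ} (hn : 0 < n) (hpar : (n - 1) % 2 = 0) (f : NState n) :
    decFun n hn (encFun n hn f) = f := by
  funext i
  simp only [decFun]
  by_cases hi : i = ⟨0, hn⟩
  · rw [if_pos hi, sQ_encFun hn hpar, hi]
  · rw [if_neg hi]
    have h0 : encFun n hn f ⟨0, hn⟩ = sQ f := by simp [encFun]
    have h1 : encFun n hn f i = f i + sQ f := by simp [encFun, hi]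
    rw [h0, h1, fin2_helper2]
lemma encU_eq_PMat (n : ℕ) (hn : 0 < n) :
    encU n hn = PMat (encFun n hn) := by
  set z : Fin n := ⟨0, hn⟩ with hz
  have e1 : (fun j => if j = z then (1 : NMat n) else nCNOT z j)
      = fun j => PMat (if j = z then id else cnotFun z j) := by
    funext j; by_cases hj : j = z <;> simp [hj, PMat_id, nCNOT_eq_PMat]
  have e2 : (fun j => if j = z then (1 : NMat n) else nCNOT j z)
      = fun j => PMat (if j = z then id else cnotFun j z) := by
    funext j; by_cases hj : j = z <;> simp [hj, PMat_id, nCNOT_eq_PMat]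
  rw [encU, ← hz, e1, e2, prod_PMat, prod_PMat, PMat_mul]
  suffices h : (List.foldr (fun j σ => (if j = z then id else cnotFun z j) ∘ σ) id (List.finRange n) ∘
        List.foldr (fun j σ => (if j = z then id else cnotFun j z) ∘ σ) id (List.finRange n))
      = encFun n hn by rw [h]
  funext f
  rw [Function.comp_apply,
    foldr_cnot_to_z z _ f,
    foldr_cnot_from_z z _ (List.nodup_finRange n) _]
  have hsum : f z + ((List.finRange n).map fun j => if j = z then 0 else f j).sum = sQ f := by
    rw [← Fin.sum_univ_def, sum_ite_z, zero_add, sQ, ← Finset.add_sum_erase _ f (Finset.mem_univ z)]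
  rw [hsum]
  funext i
  by_cases hi : i = z
  · subst hi; simp [encFun, ← hz]
  · simp [encFun, hi, Function.update_of_ne hi, ← hz]

lemma conj_PMat {n : ℕ} (σ τ : NState n → NState n) (h1 : ∀ f, σ (τ f) = f)
    (h2 : ∀ f, τ (σ f) = f) (M : NMat n) (g f : NState n) :
    (PMat σ * M * (PMat σ)ᴴ) g f = M (τ g) (τ f) := by
  have key : ∀ a b : NState n, (if a = σ b then (1:ℂ) else 0) = if b = τ a then 1 else 0 := by
    intro a b
    by_cases h : a = σ b
    · rw [if_pos h, if_pos (by rw [h, h2])]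
    · rw [if_neg h, if_neg (fun hb => h (by rw [hb, h1]))]
  have inner : ∀ b, (PMat σ * M) g b = M (τ g) b := by
    intro b
    rw [Matrix.mul_apply]
    simp only [PMat, key]
    rw [Finset.sum_eq_single (τ g)]
    · simp
    · intro a _ ha; simp [ha]
    · simp
  rw [Matrix.mul_apply]
  have star_ite : ∀ c : Prop, ∀ _ : Decidable c,
      star (if c then (1:ℂ) else 0) = if c then 1 else 0 := by
    intro c _; split <;> simp
  simp only [inner, Matrix.conjTranspose_apply, PMat, star_ite, key]
  rw [Finset.sum_eq_single (τ f)]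
  · simp
  · intro b _ hb; simp [hb]
  · simp
def chi : Fin 2 → ℂ := fun a => if a = 0 then 1 else -1

lemma chi_add (a b : Fin 2) : chi (a + b) = chi a * chi b := by
  fin_cases a <;> fin_cases b <;> norm_num [chi] <;> decide

lemma chi_sum {ι : Type*} (s : Finset ι) (g : ι → Fin 2) :
    chi (∑ j ∈ s, g j) = ∏ j ∈ s, chi (g j) := by
  induction s using Finset.cons_induction with
  | empty => simp [chi]
  | cons a s ha ih => rw [Finset.sum_cons, Finset.prod_cons, chi_add, ih]

lemma X_diag (a : Fin 2) : Xmat a a = 0 := by fin_cases a <;> simp [Xmat]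
lemma Y_diag (a : Fin 2) : Ymat a a = 0 := by fin_cases a <;> simp [Ymat]
lemma Z_diag (a : Fin 2) : Zmat a a = chi a := by fin_cases a <;> simp [Zmat, chi]
lemma X_off (a b : Fin 2) (h : a ≠ b) : Xmat a b = 1 := by
  fin_cases a <;> fin_cases b <;> simp_all [Xmat]
lemma Z_off (a b : Fin 2) (h : a ≠ b) : Zmat a b = 0 := by
  fin_cases a <;> fin_cases b <;> simp_all [Zmat]
lemma Y_off (a b : Fin 2) (h : a ≠ b) : Ymat a b = -Complex.I * chi a := by
  fin_cases a <;> fin_cases b <;> simp_all [Ymat, chi]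

lemma pauli0 : pauli 0 = 1 := rfl
lemma pauli1 : pauli 1 = Xmat := rfl
lemma pauli2 : pauli 2 = Ymat := rfl
lemma pauli3 : pauli 3 = Zmat := rfl

variable (ψ : Matrix (Fin 2) (Fin 2) ℂ)

lemma tr0 : ((1 : Matrix (Fin 2) (Fin 2) ℂ) * ψ).trace = ψ 0 0 + ψ 1 1 := by
  rw [one_mul]; simp [Matrix.trace, Fin.sum_univ_two]
lemma trX : (Xmat * ψ).trace = ψ 1 0 + ψ 0 1 := by
  simp [Matrix.trace, Matrix.mul_apply, Fin.sum_univ_two, Xmat, Matrix.vecMul, dotProduct, Matrix.vecHead, Matrix.vecTail]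
lemma trY : (Ymat * ψ).trace = Complex.I * ψ 0 1 - Complex.I * ψ 1 0 := by
  simp [Matrix.trace, Matrix.mul_apply, Fin.sum_univ_two, Ymat, Matrix.vecMul, dotProduct, Matrix.vecHead, Matrix.vecTail]; ring
lemma trZ : (Zmat * ψ).trace = ψ 0 0 - ψ 1 1 := by
  simp [Matrix.trace, Matrix.mul_apply, Fin.sum_univ_two, Zmat, Matrix.vecMul, dotProduct, Matrix.vecHead, Matrix.vecTail]; ring

lemma pow_half (n : ℕ) (hn : 0 < n) : ((1:ℂ)/2)^(n-1) = 2 * ((1:ℂ)/2^n) := by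
  rw [show n = (n-1)+1 by omega, pow_succ]
  rw [div_pow, one_pow]
  have h2 : ((2:ℂ))^(n-1) ≠ 0 := pow_ne_zero _ (by norm_num)
  field_simp
  simp

lemma negI_pow (n : ℕ) (h4 : n % 4 = 1) : (-Complex.I)^n = -Complex.I := by
  have h14 : (-Complex.I)^4 = 1 := by
    rw [show (4:ℕ) = 2*2 by rfl, pow_mul, neg_pow, Complex.I_sq]
    norm_num
  rw [show n = 4 * (n/4) + 1 by omega, pow_add, pow_mul, h14, one_pow, pow_one, one_mul]

lemma odd_nsmul_fin2 (n : ℕ) (h : n % 2 = 1) (x : Fin 2) : n • x = x := by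
  rw [show n = 2*(n/2)+1 by omega, add_nsmul, even_nsmul_fin2, zero_add, one_nsmul]

lemma fin2_cases (x : Fin 2) : x = 0 ∨ x = 1 := by omega
lemma fin2_cancel : ∀ a b c : Fin 2, a + c = b + c → a = b := by decide
lemma fin2_ne_succ : ∀ a b : Fin 2, a ≠ b → b = a + 1 := by decide
lemma fin2_cond_of_ne : ∀ a b c d : Fin 2, a ≠ b → c ≠ d → a + c = b + d := by decide
lemma fin2_ne_of_cond : ∀ a b c d : Fin 2, a + c = b + d → c ≠ d → a ≠ b := by decide

lemma pointwise (n : ℕ) (hn : 0 < n) (h4 : n % 4 = 1) (ψ : Matrix (Fin 2) (Fin 2) ℂ)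
    (g f : NState n) :
    ψ (sQ g) (sQ f) *
      (if ∀ j : Fin n, j ≠ ⟨0, hn⟩ → g j + g ⟨0, hn⟩ = f j + f ⟨0, hn⟩ then
        ((1:ℂ)/2)^(n-1) else 0)
    = ((1:ℂ)/2^n) * ∑ k : Fin 4, (pauli k * ψ).trace * ∏ j, pauli k (g j) (f j) := by
  set z : Fin n := ⟨0, hn⟩ with hz
  rw [Fin.sum_univ_four, pauli0, pauli1, pauli2, pauli3, tr0, trX, trY, trZ]
  by_cases hd : g = f
  · subst hd
    have P0 : ∏ j, (1 : Matrix (Fin 2) (Fin 2) ℂ) (g j) (g j) = 1 :=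
      Finset.prod_eq_one fun j _ => Matrix.one_apply_eq _
    have PX : ∏ j, Xmat (g j) (g j) = 0 :=
      Finset.prod_eq_zero (Finset.mem_univ z) (X_diag _)
    have PY : ∏ j, Ymat (g j) (g j) = 0 :=
      Finset.prod_eq_zero (Finset.mem_univ z) (Y_diag _)
    have PZ : ∏ j, Zmat (g j) (g j) = chi (sQ g) := by
      rw [sQ, chi_sum]
      exact Finset.prod_congr rfl fun j _ => Z_diag _
    rw [P0, PX, PY, PZ, if_pos (fun j _ => rfl), pow_half n hn]
    rcases fin2_cases (sQ g) with h | h <;> rw [h] <;> simp [chi] <;> ring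
  · by_cases hoff : ∀ j, g j ≠ f j
    · have hcond : ∀ j : Fin n, j ≠ z → g j + g z = f j + f z := fun j _ =>
        fin2_cond_of_ne _ _ _ _ (hoff j) (hoff z)
      have hfg : ∀ j, f j = g j + 1 := fun j => fin2_ne_succ _ _ (hoff j)
      have hsf : sQ f = sQ g + 1 := by
        rw [sQ, sQ, Finset.sum_congr rfl fun j _ => hfg j, Finset.sum_add_distrib,
          Finset.sum_const, Finset.card_univ, Fintype.card_fin,
          odd_nsmul_fin2 n (by omega)]
      have P0 : ∏ j, (1 : Matrix (Fin 2) (Fin 2) ℂ) (g j) (f j) = 0 :=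
        Finset.prod_eq_zero (Finset.mem_univ z) (Matrix.one_apply_ne (hoff z))
      have PZ : ∏ j, Zmat (g j) (f j) = 0 :=
        Finset.prod_eq_zero (Finset.mem_univ z) (Z_off _ _ (hoff z))
      have PX : ∏ j, Xmat (g j) (f j) = 1 :=
        Finset.prod_eq_one fun j _ => X_off _ _ (hoff j)
      have PY : ∏ j, Ymat (g j) (f j) = -Complex.I * chi (sQ g) := by
        rw [Finset.prod_congr rfl fun j _ => Y_off _ _ (hoff j),
          Finset.prod_mul_distrib, Finset.prod_const, Finset.card_univ, Fintype.card_fin,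
          negI_pow n h4, sQ, chi_sum]
      rw [P0, PX, PY, PZ, if_pos hcond, hsf, pow_half n hn]
      have hI : Complex.I * Complex.I = -1 := Complex.I_mul_I
      rcases fin2_cases (sQ g) with h | h
      · rw [h]; simp [chi]
        linear_combination (((1:ℂ)/2^n) * (ψ 0 1 - ψ 1 0)) * hI
      · rw [h]; simp [chi]
        linear_combination (((1:ℂ)/2^n) * (ψ 1 0 - ψ 0 1)) * hI
    · push_neg at hoff
      obtain ⟨a, ha⟩ := hoff
      obtain ⟨b, hb⟩ := Function.ne_iff.mp hd
      have P0 : ∏ j, (1 : Matrix (Fin 2) (Fin 2) ℂ) (g j) (f j) = 0 :=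
        Finset.prod_eq_zero (Finset.mem_univ b) (Matrix.one_apply_ne hb)
      have PZ : ∏ j, Zmat (g j) (f j) = 0 :=
        Finset.prod_eq_zero (Finset.mem_univ b) (Z_off _ _ hb)
      have PX : ∏ j, Xmat (g j) (f j) = 0 :=
        Finset.prod_eq_zero (Finset.mem_univ a) (by rw [ha]; exact X_diag _)
      have PY : ∏ j, Ymat (g j) (f j) = 0 :=
        Finset.prod_eq_zero (Finset.mem_univ a) (by rw [ha]; exact Y_diag _)
      have hcond : ¬ ∀ j : Fin n, j ≠ z → g j + g z = f j + f z := by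
        intro h
        by_cases hgz : g z = f z
        · apply hd
          funext j
          by_cases hj : j = z
          · rw [hj]; exact hgz
          · exact fin2_cancel _ _ _ (by rw [h j hj, hgz])
        · have : ∀ j, g j ≠ f j := by
            intro j
            by_cases hj : j = z
            · rw [hj]; exact hgz
            · exact fin2_ne_of_cond _ _ _ _ (h j hj) hgz
          exact this a ha
      rw [P0, PX, PY, PZ, if_neg hcond]
      ring

/-- **Pauli support of an encoded single row.**
For `n ≡ 1 (mod 4)` positive, the `n`-qubit encoding unitary `U`, and any 2×2 complex
matrix `ψ`: `U·(ψ ⊗ (I/2)^{⊗(n−1)})·U† = 2^{−n} · Σ_{k=0}^{3} tr(σ_k ψ) · σ_k^{⊗n}`. -/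
theorem encoded_row_pauli_support (n : ℕ) (hn : 0 < n) (h4 : n % 4 = 1)
    (ψ : Matrix (Fin 2) (Fin 2) ℂ) :
    encU n hn * mixExt n hn ψ * (encU n hn)ᴴ =
      ((1 : ℂ) / 2 ^ n) • ∑ k : Fin 4, (pauli k * ψ).trace • kronPow (pauli k) := by
  have hpar : (n - 1) % 2 = 0 := by omega
  rw [encU_eq_PMat n hn]
  ext g f
  rw [conj_PMat (encFun n hn) (decFun n hn) (enc_dec hn hpar) (dec_enc hn hpar)]
  have hcond : (∀ j : Fin n, j ≠ ⟨0, hn⟩ → decFun n hn g j = decFun n hn f j)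
      ↔ (∀ j : Fin n, j ≠ ⟨0, hn⟩ → g j + g ⟨0, hn⟩ = f j + f ⟨0, hn⟩) := by
    apply forall_congr'
    intro j
    constructor <;> intro h hj <;> have hh := h hj <;> simpa [decFun, hj] using hh
  have lhs_eq : mixExt n hn ψ (decFun n hn g) (decFun n hn f)
      = ψ (sQ g) (sQ f) *
        (if ∀ j : Fin n, j ≠ ⟨0, hn⟩ → g j + g ⟨0, hn⟩ = f j + f ⟨0, hn⟩ then
          ((1:ℂ)/2)^(n-1) else 0) := by
    simp only [mixExt]
    congr 1
    exact if_congr hcond rfl rfl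
  rw [lhs_eq, pointwise n hn h4 ψ g f]
  simp only [Matrix.smul_apply, Matrix.sum_apply, smul_eq_mul, kronPow]


end
end
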